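/- Let W be a closed subspace of a real Hilbert space H, let F : H → ℝ be a functional of the form F(v) = J(v) − L(v), where L is a bounded linear functional and J is twice Gateaux differentiable with second derivative satisfying c_A‖h‖² ≤ J''(v)[h,h] ≤ C_A‖h‖² for all v, h ∈ H with constants 0 < c_A ≤ C_A. If w ∈ W minimizes F over W, then for all v ∈ W: (c_A/2)‖v − w‖² ≤ F(v) − F(w) ≤ (C_A/2)‖v − w‖². -/

import Mathlib

/-- If `F = J - L` with `L` bounded linear and `J` twice differentiable with
`c_A‖h‖² ≤ J''(v)[h,h] ≤ C_A‖h‖²`, and `w` minimizes `F` over a closed subspace `W`,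
then `(c_A/2)‖v-w‖² ≤ F(v) - F(w) ≤ (C_A/2)‖v-w‖²` for all `v ∈ W`. -/
theorem stmt3 {H : Type*} [NormedAddCommGroup H] [InnerProductSpace ℝ H] [CompleteSpace H]
    (W : Submodule ℝ H) (hW : IsClosed (W : Set H))
    (J F : H → ℝ) (L : H →L[ℝ] ℝ)
    (hF : ∀ v, F v = J v - L v)
    (J' : H → H →L[ℝ] ℝ) (J'' : H → H →L[ℝ] H →L[ℝ] ℝ)
    (hJ' : ∀ v, HasFDerivAt J (J' v) v)
    (hJ'' : ∀ v, HasFDerivAt J' (J'' v) v)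
    (c_A C_A : ℝ) (hc : 0 < c_A) (hcC : c_A ≤ C_A)
    (hell : ∀ v h, c_A * ‖h‖^2 ≤ J'' v h h ∧ J'' v h h ≤ C_A * ‖h‖^2)
    (w : H) (hw : w ∈ W) (hmin : ∀ v ∈ W, F w ≤ F v) :
    ∀ v ∈ W, c_A/2 * ‖v - w‖^2 ≤ F v - F w ∧ F v - F w ≤ C_A/2 * ‖v - w‖^2 := by
  intro v hv
  set e := v - w with he
  have hmem : ∀ t : ℝ, w + t • e ∈ W := fun t =>
    W.add_mem hw (W.smul_mem t (W.sub_mem hv hw))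
  have hve : w + (1:ℝ) • e = v := by simp [he]
  have hψ : ∀ t : ℝ, HasDerivAt (fun t : ℝ => w + t • e) e t := by
    intro t
    simpa using ((hasDerivAt_id t).smul_const e).const_add w
  have hg : ∀ t : ℝ, HasDerivAt (fun t : ℝ => F (w + t • e)) (J' (w + t • e) e - L e) t := by
    intro t
    have h1 : HasDerivAt (fun t : ℝ => J (w + t • e)) (J' (w + t • e) e) t :=
      (hJ' _).comp_hasDerivAt t (hψ t)
    have h2 : HasDerivAt (fun t : ℝ => L (w + t • e)) (L e) t :=
      L.hasFDerivAt.comp_hasDerivAt t (hψ t)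
    simpa [hF, Pi.sub_def] using h1.sub h2
  have hg1 : ∀ t : ℝ, HasDerivAt (fun t : ℝ => J' (w + t • e) e) (J'' (w + t • e) e e) t := by
    intro t
    have h1 : HasDerivAt (fun t : ℝ => J' (w + t • e)) (J'' (w + t • e) e) t :=
      (hJ'' _).comp_hasDerivAt t (hψ t)
    simpa using h1.clm_apply (hasDerivAt_const t e)
  have hzero : J' w e - L e = 0 := by
    have hmin0 : IsLocalMin (fun t : ℝ => F (w + t • e)) 0 :=
      Filter.Eventually.of_forall fun t => by
        simpa using hmin _ (hmem t)
    have h0 := hmin0.hasDerivAt_eq_zero (hg 0)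
    simpa using h0
  -- lower bound
  have low : c_A/2 * ‖e‖^2 ≤ F v - F w := by
    set p : ℝ → ℝ := fun t => F (w + t • e) - c_A/2 * ‖e‖^2 * t^2 with hp
    have hp' : ∀ t, HasDerivAt p (J' (w + t • e) e - L e - c_A * ‖e‖^2 * t) t := by
      intro t
      have h2 : HasDerivAt (fun t : ℝ => c_A/2 * ‖e‖^2 * t^2) (c_A * ‖e‖^2 * t) t := by
        have := (hasDerivAt_pow 2 t).const_mul (c_A/2 * ‖e‖^2)
        exact this.congr_deriv (by push_cast; ring)
      exact (hg t).sub h2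
    set p' : ℝ → ℝ := fun t => J' (w + t • e) e - L e - c_A * ‖e‖^2 * t with hpd
    have hp'' : ∀ t, HasDerivAt p' (J'' (w + t • e) e e - c_A * ‖e‖^2) t := by
      intro t
      have h2 : HasDerivAt (fun t : ℝ => c_A * ‖e‖^2 * t) (c_A * ‖e‖^2) t := by
        simpa using (hasDerivAt_id t).const_mul (c_A * ‖e‖^2)
      exact ((hg1 t).sub_const (L e)).sub h2
    have mono : Monotone p' := by
      apply monotone_of_deriv_nonneg (fun t => (hp'' t).differentiableAt)
      intro t
      rw [(hp'' t).deriv]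
      have := (hell (w + t • e) e).1
      linarith
    have hp'0 : p' 0 = 0 := by simp [hpd, hzero]
    have hmono : MonotoneOn p (Set.Icc (0:ℝ) 1) := by
      apply monotoneOn_of_deriv_nonneg (convex_Icc 0 1)
      · exact (fun t _ => (hp' t).differentiableAt.continuousAt.continuousWithinAt)
      · exact fun t _ => (hp' t).differentiableAt.differentiableWithinAt
      · intro t ht
        rw [(hp' t).deriv]
        have h1 : (0:ℝ) ≤ t := by
          rw [interior_Icc] at ht
          exact ht.1.le
        have := mono h1
        rw [hp'0] at this
        exact this
    have := hmono (Set.left_mem_Icc.2 zero_le_one) (Set.right_mem_Icc.2 zero_le_one) zero_le_one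
    simp only [hp, hve, zero_smul, add_zero] at this
    nlinarith [this]
  -- upper bound
  have high : F v - F w ≤ C_A/2 * ‖e‖^2 := by
    set p : ℝ → ℝ := fun t => C_A/2 * ‖e‖^2 * t^2 - F (w + t • e) with hp
    have hp' : ∀ t, HasDerivAt p (C_A * ‖e‖^2 * t - (J' (w + t • e) e - L e)) t := by
      intro t
      have h2 : HasDerivAt (fun t : ℝ => C_A/2 * ‖e‖^2 * t^2) (C_A * ‖e‖^2 * t) t := by
        have := (hasDerivAt_pow 2 t).const_mul (C_A/2 * ‖e‖^2)
        exact this.congr_deriv (by push_cast; ring)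
      exact h2.sub (hg t)
    set p' : ℝ → ℝ := fun t => C_A * ‖e‖^2 * t - (J' (w + t • e) e - L e) with hpd
    have hp'' : ∀ t, HasDerivAt p' (C_A * ‖e‖^2 - J'' (w + t • e) e e) t := by
      intro t
      have h2 : HasDerivAt (fun t : ℝ => C_A * ‖e‖^2 * t) (C_A * ‖e‖^2) t := by
        simpa using (hasDerivAt_id t).const_mul (C_A * ‖e‖^2)
      exact h2.sub ((hg1 t).sub_const (L e))
    have mono : Monotone p' := by
      apply monotone_of_deriv_nonneg (fun t => (hp'' t).differentiableAt)
      intro t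
      rw [(hp'' t).deriv]
      have := (hell (w + t • e) e).2
      linarith
    have hp'0 : p' 0 = 0 := by simp [hpd, hzero]
    have hmono : MonotoneOn p (Set.Icc (0:ℝ) 1) := by
      apply monotoneOn_of_deriv_nonneg (convex_Icc 0 1)
      · exact (fun t _ => (hp' t).differentiableAt.continuousAt.continuousWithinAt)
      · exact fun t _ => (hp' t).differentiableAt.differentiableWithinAt
      · intro t ht
        rw [(hp' t).deriv]
        have h1 : (0:ℝ) ≤ t := by
          rw [interior_Icc] at ht
          exact ht.1.le
        have := mono h1
        rw [hp'0] at this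
        exact this
    have := hmono (Set.left_mem_Icc.2 zero_le_one) (Set.right_mem_Icc.2 zero_le_one) zero_le_one
    simp only [hp, hve, zero_smul, add_zero] at this
    nlinarith [this]
  exact ⟨low, high⟩
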